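/- Let G̃ : ℝ≥0 → ℝ^p satisfy G̃'(t) = -α F(t) φ(t) φ(t)ᵀ G̃(t), where F is invertible and satisfies d/dt[F⁻¹(t)] = -β(t) F⁻¹(t) + α φ(t) φ(t)ᵀ, and let z solve ż(t) = -β(t) z(t), z(0) = 1, with F(0) = (1/f₀) I. Then F⁻¹(t) G̃(t) = z(t) f₀ G̃(0) for all t ≥ 0. -/

import Mathlib

open Matrix

attribute [local instance] Matrix.normedAddCommGroup Matrix.normedSpace

lemma hasDerivAt_mulVec {p : ℕ} {A : ℝ → Matrix (Fin p) (Fin p) ℝ}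
    {v : ℝ → Fin p → ℝ} {A' : Matrix (Fin p) (Fin p) ℝ} {v' : Fin p → ℝ} {t : ℝ}
    (hA : HasDerivAt A A' t) (hv : HasDerivAt v v' t) :
    HasDerivAt (fun s => (A s).mulVec (v s)) (A'.mulVec (v t) + (A t).mulVec v') t := by
  let L : Matrix (Fin p) (Fin p) ℝ →L[ℝ] (Fin p → ℝ) →L[ℝ] (Fin p → ℝ) :=
    LinearMap.toContinuousLinearMap
      ((LinearMap.toContinuousLinearMap.toLinearMap).comp
        (Matrix.toLin' : Matrix (Fin p) (Fin p) ℝ ≃ₗ[ℝ] ((Fin p → ℝ) →ₗ[ℝ] (Fin p → ℝ))).toLinearMap)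
  have hc : HasDerivAt (fun s => L (A s)) (L A') t :=
    L.hasFDerivAt.comp_hasDerivAt t hA
  have := hc.clm_apply hv
  simpa [L, Matrix.toLin'_apply] using this

/-- key structural property of the CT least-squares estimator:
`F⁻¹(t) G̃(t) = z(t) f₀ G̃(0)`. -/
theorem stmt2 {p : ℕ} (F : ℝ → Matrix (Fin p) (Fin p) ℝ)
    (Gt : ℝ → Fin p → ℝ) (z : ℝ → ℝ) (φ : ℝ → Fin p → ℝ) (β : ℝ → ℝ)
    (α f₀ : ℝ) (hα : 0 < α) (hf₀ : 0 < f₀)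
    (hφ : Continuous φ) (hβ : Continuous β)
    (hinv : ∀ t, 0 ≤ t → IsUnit (F t))
    (hG : ∀ t, 0 ≤ t → HasDerivAt Gt
      (-α • (F t).mulVec ((vecMulVec (φ t) (φ t)).mulVec (Gt t))) t)
    (hFinv : ∀ t, 0 ≤ t → HasDerivAt (fun s => (F s)⁻¹)
      (-(β t) • (F t)⁻¹ + α • vecMulVec (φ t) (φ t)) t)
    (hz : ∀ t, 0 ≤ t → HasDerivAt z (-(β t) * z t) t)
    (hz0 : z 0 = 1)
    (hF0 : F 0 = f₀⁻¹ • (1 : Matrix (Fin p) (Fin p) ℝ)) :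
    ∀ t, 0 ≤ t → (F t)⁻¹.mulVec (Gt t) = (z t * f₀) • Gt 0 := by
  set u : ℝ → Fin p → ℝ := fun t => (F t)⁻¹.mulVec (Gt t) - (z t * f₀) • Gt 0 with hu_def
  -- u 0 = 0
  have hF0inv : (F 0)⁻¹ = f₀ • (1 : Matrix (Fin p) (Fin p) ℝ) := by
    apply Matrix.inv_eq_right_inv
    rw [hF0, smul_mul_smul_comm, one_mul, inv_mul_cancel₀ hf₀.ne', one_smul]
  have hu0 : u 0 = 0 := by
    simp [hu_def, hF0inv, hz0, Matrix.smul_mulVec, Matrix.one_mulVec]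
  -- derivative of u
  have hu' : ∀ t, 0 ≤ t → HasDerivAt u (-(β t) • u t) t := by
    intro t ht
    have h1 : HasDerivAt (fun s => (F s)⁻¹.mulVec (Gt s))
        ((-(β t) • (F t)⁻¹ + α • vecMulVec (φ t) (φ t)).mulVec (Gt t)
          + (F t)⁻¹.mulVec (-α • (F t).mulVec ((vecMulVec (φ t) (φ t)).mulVec (Gt t)))) t :=
      hasDerivAt_mulVec (hFinv t ht) (hG t ht)
    have hFFinv : (F t)⁻¹ * F t = 1 := by
      apply Matrix.nonsing_inv_mul
      exact (Matrix.isUnit_iff_isUnit_det (F t)).mp (hinv t ht)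
    have h1' : (-(β t) • (F t)⁻¹ + α • vecMulVec (φ t) (φ t)).mulVec (Gt t)
          + (F t)⁻¹.mulVec (-α • (F t).mulVec ((vecMulVec (φ t) (φ t)).mulVec (Gt t)))
        = -(β t) • (F t)⁻¹.mulVec (Gt t) := by
      rw [Matrix.add_mulVec, Matrix.smul_mulVec, Matrix.smul_mulVec,
        Matrix.mulVec_smul, Matrix.mulVec_mulVec, hFFinv,
        Matrix.one_mulVec]
      simp [neg_smul]
    rw [h1'] at h1
    have h2 : HasDerivAt (fun s => (z s * f₀) • Gt 0)
        (-(β t) • ((z t * f₀) • Gt 0)) t := by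
      have := ((hz t ht).mul_const f₀).smul_const (Gt 0)
      convert this using 1
      · rfl
      · rfl
      · rfl
      rw [smul_smul]
      ring_nf
    have := h1.sub h2
    convert this using 1
    · rfl
    · rfl
    · rfl
    simp [hu_def, smul_sub]
    · rfl
    simp [hu_def, smul_sub]
  -- antiderivative of β
  set B : ℝ → ℝ := fun t => ∫ s in (0:ℝ)..t, β s with hB_def
  have hB : ∀ t : ℝ, HasDerivAt B (β t) t := fun t =>
    (hβ.integral_hasStrictDerivAt 0 t).hasDerivAt
  set v : ℝ → Fin p → ℝ := fun t => Real.exp (B t) • u t with hv_def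
  have hv' : ∀ t, 0 ≤ t → HasDerivAt v 0 t := by
    intro t ht
    have he : HasDerivAt (fun s => Real.exp (B s)) (Real.exp (B t) * β t) t :=
      (Real.hasDerivAt_exp (B t)).comp t (hB t)
    have := he.smul (hu' t ht)
    convert this using 1
    · rfl
    · rfl
    · rfl
    · rfl
    rw [smul_smul]
    simp [mul_comm, mul_left_comm]
  intro t ht
  have hvt : v t = v 0 := by
    rcases eq_or_lt_of_le ht with h | h
    · rw [← h]
    · have hcont : ContinuousOn v (Set.Icc 0 t) := fun x hx =>
        ((hv' x hx.1).continuousAt).continuousWithinAt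
      have key := constant_of_has_deriv_right_zero hcont
        (fun x hx => ((hv' x hx.1).hasDerivWithinAt))
      exact key t (Set.mem_Icc.mpr ⟨ht, le_refl t⟩)
  have hB0 : B 0 = 0 := by simp [hB_def]
  have hv0 : v 0 = 0 := by simp [hv_def, hu0]
  rw [hv0] at hvt
  have hut : u t = 0 := by
    have := hvt
    simp only [hv_def] at this
    have hne : Real.exp (B t) ≠ 0 := Real.exp_ne_zero _
    exact (smul_eq_zero.mp this).resolve_left hne
  have := sub_eq_zero.mp hut
  exact this
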